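/- The relative interval of Nai versus Maj is [−1/4, 1/4]; in particular, for the sequence I_n consisting of ⌈n/2⌉ copies of a_0 followed by ⌊n/2⌋ distinct items, Maj(I_n) − Nai(I_n) = ⌈n/2⌉ − ⌊n/2⌋/n − ⌈n/2⌉²/n, which is asymptotically n/4. -/

import Mathlib

open scoped BigOperators

noncomputable section

/-- frequency of item `a` in sequence `I` -/
def freq (I : List ℕ) (a : ℕ) : ℝ := (I.count a : ℝ) / (I.length : ℝ)

/-- profit (aggregate frequency) of buffer sequence `S` against input `I` -/
def profit (I S : List ℕ) : ℝ := (S.map (freq I)).sum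

/-- Naive algorithm: buffers every arriving item. -/
def naiP (I : List ℕ) : ℝ := profit I I

/-- Buffers of the eager algorithm: buffer each arriving item until the first
repeated item (two equal consecutive items), then keep it forever. -/
def eagRun : List ℕ → List ℕ
  | [] => []
  | [x] => [x]
  | x :: y :: rest =>
      if x = y then x :: List.replicate (rest.length + 1) x
      else x :: eagRun (y :: rest)

def eagP (I : List ℕ) : ℝ := profit I (eagRun I)

/-- One step of the Majority algorithm on state (buffer, counter). -/
def majStep (s : ℕ × ℕ) (a : ℕ) : ℕ × ℕ :=
  if s.2 = 0 then (a, 1)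
  else if a = s.1 then (s.1, s.2 + 1)
  else (s.1, s.2 - 1)

def majBuffers (I : List ℕ) : List ℕ :=
  ((List.scanl majStep ((0 : ℕ), (0 : ℕ)) I).tail).map Prod.fst

def majP (I : List ℕ) : ℝ := profit I (majBuffers I)

/-- A valid offline buffer schedule: at each step the buffer holds either the
currently arriving item or the previously buffered item (the first buffered
item must be the first arriving item). -/
def ValidSched (I S : List ℕ) : Prop :=
  S.length = I.length ∧
    ∀ i, i < S.length →
      S.getD i 0 = I.getD i 0 ∨ (0 < i ∧ S.getD i 0 = S.getD (i - 1) 0)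

/-- Optimal offline profit. -/
def optP (I : List ℕ) : ℝ := sSup {x | ∃ S, ValidSched I S ∧ x = profit I S}

/-- Worst-permutation value of an algorithm's profit. -/
def worstP (f : List ℕ → ℝ) (I : List ℕ) : ℝ := sInf {x | ∃ J, J.Perm I ∧ x = f J}

/-- E_n = a,a,b,b,...,b with n-2 copies of b. -/
def Eseq (n a b : ℕ) : List ℕ := a :: a :: List.replicate (n - 2) b

/-- W_n = a_1,a_0,a_2,a_0,... with item 0 playing the role of a_0. -/
def Wseq (n : ℕ) : List ℕ :=
  ((List.range (n / 2)).flatMap fun i => [i + 1, 0]) ++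
    (if n % 2 = 1 then [n / 2 + 1] else [])

/-- W'_n = a_1,...,a_⌈n/2⌉,a_0,...,a_0 with ⌊n/2⌋ copies of a_0 = 0. -/
def Wseq' (n : ℕ) : List ℕ :=
  ((List.range ((n + 1) / 2)).map (· + 1)) ++ List.replicate (n / 2) 0

/-- I_n = ⌈n/2⌉ copies of a_0 = 0 followed by ⌊n/2⌋ distinct items. -/
def Iseq (n : ℕ) : List ℕ :=
  List.replicate ((n + 1) / 2) 0 ++ (List.range (n / 2)).map (· + 1)

/-- D(I): the items of `I` listed in nondecreasing order of frequency. -/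
def Dsort (I : List ℕ) : List ℕ :=
  List.insertionSort (fun x y => I.count x ≤ I.count y) I

/-- The interleaving permutation a'_1, a'_n, a'_2, a'_{n-1}, ... of a list. -/
def interleave : List ℕ → List ℕ
  | [] => []
  | x :: xs => x :: interleave xs.reverse
termination_by l => l.length
decreasing_by set_option linter.unnecessarySimpa false in simpa using Nat.lt_succ_self xs.length

/-- max over sequences of length n of f(I) - g(I). -/
def maxDiff (f g : List ℕ → ℝ) (n : ℕ) : ℝ :=
  sSup {d | ∃ I : List ℕ, I.length = n ∧ d = f I - g I}

/-- min over sequences of length n of f(I) - g(I). -/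
def minDiff (f g : List ℕ → ℝ) (n : ℕ) : ℝ :=
  sInf {d | ∃ I : List ℕ, I.length = n ∧ d = f I - g I}

/-- A deterministic online algorithm for the single-buffer frequent items
problem: the buffer after each nonempty prefix is either the arriving item or
the previous buffer content. -/
structure OnlineAlg where
  buf : List ℕ → ℕ
  first : ∀ x, buf [x] = x
  step : ∀ l x, l ≠ [] → buf (l ++ [x]) = x ∨ buf (l ++ [x]) = buf l

/-- Profit of an online algorithm on input `I`. -/
def oprofit (A : OnlineAlg) (I : List ℕ) : ℝ :=
  ∑ t ∈ Finset.range I.length, freq I (A.buf (I.take (t + 1)))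

end


noncomputable section

/-- buffer list of the majority run started from state `s`. -/
def bufs (s : ℕ × ℕ) : List ℕ → List ℕ
  | [] => []
  | a :: J => (majStep s a).1 :: bufs (majStep s a) J

lemma bufs_eq_scanl (s : ℕ × ℕ) (J : List ℕ) :
    bufs s J = ((List.scanl majStep s J).tail).map Prod.fst := by
  induction J generalizing s with
  | nil => simp [bufs]
  | cons a J ih =>
      rw [List.scanl_cons]
      simp only [bufs, ih]
      cases J with
      | nil => simp
      | cons b J => rw [List.scanl_cons]; simp

lemma majBuffers_eq (I : List ℕ) : majBuffers I = bufs (0, 0) I :=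
  (bufs_eq_scanl _ _).symm

/-- running sum of `c (arrival) - c (buffer)`. -/
def dsum (c : ℕ → ℝ) : ℕ × ℕ → List ℕ → ℝ
  | _, [] => 0
  | s, a :: J => (c a - c (majStep s a).1) + dsum c (majStep s a) J

lemma dsum_eq (c : ℕ → ℝ) (s : ℕ × ℕ) (J : List ℕ) :
    dsum c s J = (J.map c).sum - ((bufs s J).map c).sum := by
  induction J generalizing s with
  | nil => simp [dsum, bufs]
  | cons a J ih => simp [dsum, bufs, ih]; ring
lemma dsum_le (c : ℕ → ℝ) (A : ℕ) (M : ℝ) (hM : 0 ≤ M) (h0 : ∀ a, 0 ≤ c a)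
    (J : List ℕ) : ∀ s : ℕ × ℕ, (∀ a ∈ J, c a ≤ M) → (∀ a ∈ J, a ≠ A → c a ≤ c A) →
    dsum c s J ≤ M * ((J.countP (· ≠ A) : ℝ) + (if s.1 = A then 0 else (s.2 : ℝ))) := by
  induction J with
  | nil =>
      intro s _ _
      have : (0:ℝ) ≤ (if s.1 = A then 0 else (s.2 : ℝ)) := by split <;> positivity
      show (0:ℝ) ≤ _
      nlinarith
  | cons a J ih =>
      intro s hb hA
      have hcount : (((a :: J).countP (· ≠ A) : ℕ) : ℝ)
          = ((J.countP (· ≠ A) : ℕ) : ℝ) + (if a = A then 0 else 1) := by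
        rw [List.countP_cons]
        by_cases h : a = A <;> simp [h]
      have key : dsum c s (a :: J) = (c a - c (majStep s a).1) + dsum c (majStep s a) J := rfl
      have ihs := ih (majStep s a) (fun x hx => hb x (List.mem_cons_of_mem _ hx))
        (fun x hx => hA x (List.mem_cons_of_mem _ hx))
      rw [key, hcount]
      rcases s with ⟨b, k⟩
      by_cases hk : k = 0
      · -- increment from 0 : buffer becomes a
        have hs : majStep (b, k) a = (a, 1) := by simp [majStep, hk]
        rw [hs] at ihs
        rw [hs]
        subst hk
        by_cases haA : a = A
        · simp only [haA, if_pos rfl] at ihs ⊢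
          norm_num at ihs ⊢
          linarith [ihs]
        · simp only [if_neg haA] at ihs ⊢
          norm_num at ihs ⊢
          linarith [ihs]
      · by_cases hab : a = b
        · -- increment
          have hs : majStep (b, k) a = (b, k + 1) := by simp [majStep, hk, hab]
          rw [hs] at ihs; rw [hs]
          simp only [hab]
          by_cases hbA : b = A
          · simp only [hbA, if_pos rfl] at ihs ⊢; simpa using ihs
          · simp only [if_neg hbA] at ihs ⊢
            push_cast at ihs ⊢
            nlinarith [ihs]
        · -- decrement
          have hs : majStep (b, k) a = (b, k - 1) := by simp [majStep, hk, hab]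
          rw [hs] at ihs; rw [hs]
          by_cases hbA : b = A
          · have haA : a ≠ A := by rw [← hbA] at *; exact hab
            have h1 : c a ≤ c A := hA a List.mem_cons_self haA
            simp only [hbA, if_pos rfl] at ihs ⊢
            simp only [if_neg haA]
            norm_num at ihs ⊢
            nlinarith [ihs]
          · simp only [if_neg hbA] at ihs ⊢
            have h1 : c a ≤ M := hb a List.mem_cons_self
            have h2 : 0 ≤ c b := h0 b
            have hk1 : (((k-1 : ℕ)) : ℝ) = (k : ℝ) - 1 := by
              have := Nat.one_le_iff_ne_zero.2 hk; push_cast [this]; ring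
            rw [hk1] at ihs
            have hif : (0:ℝ) ≤ M * (if a = A then 0 else 1) := by positivity
            nlinarith [ihs]

lemma dsum_ge (c : ℕ → ℝ) (A : ℕ) (M : ℝ) (hM : 0 ≤ M) (h0 : ∀ a, 0 ≤ c a)
    (J : List ℕ) : ∀ s : ℕ × ℕ, (∀ a ∈ J, c a ≤ M) → (s.2 = 0 ∨ c s.1 ≤ M) →
    -(M * ((J.countP (· ≠ A) : ℝ) + (if s.1 = A then 0 else (s.2 : ℝ)))) ≤ dsum c s J := by
  induction J with
  | nil =>
      intro s _ _
      have h1 : (0:ℝ) ≤ (if s.1 = A then 0 else (s.2 : ℝ)) := by split <;> positivity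
      show _ ≤ (0:ℝ)
      nlinarith
  | cons a J ih =>
      intro s hb hinv
      have hcount : (((a :: J).countP (· ≠ A) : ℕ) : ℝ)
          = ((J.countP (· ≠ A) : ℕ) : ℝ) + (if a = A then 0 else 1) := by
        rw [List.countP_cons]
        by_cases h : a = A <;> simp [h]
      have key : dsum c s (a :: J) = (c a - c (majStep s a).1) + dsum c (majStep s a) J := rfl
      have hbJ : ∀ x ∈ J, c x ≤ M := fun x hx => hb x (List.mem_cons_of_mem _ hx)
      have hcaM : c a ≤ M := hb a List.mem_cons_self
      rw [key, hcount]
      rcases s with ⟨b, k⟩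
      by_cases hk : k = 0
      · have hs : majStep (b, k) a = (a, 1) := by simp [majStep, hk]
        have ihs := ih (a, 1) hbJ (Or.inr hcaM)
        rw [hs]
        subst hk
        by_cases haA : a = A
        · simp only [haA, if_pos rfl] at ihs ⊢
          norm_num at ihs ⊢
          linarith [ihs]
        · simp only [if_neg haA] at ihs ⊢
          norm_num at ihs ⊢
          linarith [ihs]
      · have hcb : c b ≤ M := hinv.resolve_left hk
        by_cases hab : a = b
        · have hs : majStep (b, k) a = (b, k + 1) := by simp [majStep, hk, hab]
          have ihs := ih (b, k+1) hbJ (Or.inr hcb)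
          rw [hs]
          simp only [hab]
          by_cases hbA : b = A
          · simp only [hbA, if_pos rfl] at ihs ⊢; simpa using ihs
          · simp only [if_neg hbA] at ihs ⊢
            push_cast at ihs ⊢
            nlinarith [ihs]
        · have hs : majStep (b, k) a = (b, k - 1) := by simp [majStep, hk, hab]
          have ihs := ih (b, k-1) hbJ (Or.inr hcb)
          rw [hs]
          have hca0 : 0 ≤ c a := h0 a
          by_cases hbA : b = A
          · have haA : a ≠ A := by rw [← hbA] at *; exact hab
            have hcbA : c A ≤ M := hbA ▸ hcb
            simp only [hbA, if_pos rfl] at ihs ⊢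
            simp only [if_neg haA]
            norm_num at ihs ⊢
            nlinarith [ihs, hcbA, hca0]
          · simp only [if_neg hbA] at ihs ⊢
            have hk1 : (((k-1 : ℕ)) : ℝ) = (k : ℝ) - 1 := by
              have := Nat.one_le_iff_ne_zero.2 hk; push_cast [this]; ring
            rw [hk1] at ihs
            have hif : (0:ℝ) ≤ M * (if a = A then 0 else 1) := by positivity
            nlinarith [ihs]

lemma freq_nonneg (I : List ℕ) (a : ℕ) : 0 ≤ freq I a := by
  unfold freq; positivity

lemma naiP_sub_majP (I : List ℕ) : naiP I - majP I = dsum (freq I) (0, 0) I := by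
  rw [dsum_eq, naiP, majP, majBuffers_eq, profit, profit]

lemma abs_naiP_sub_majP (I : List ℕ) : |naiP I - majP I| ≤ (I.length : ℝ) / 4 := by
  rcases List.eq_nil_or_concat I with rfl | _
  · simp [naiP, majP, profit, majBuffers]
  · have hne : I ≠ [] := by rintro rfl; simp_all
    have hn : 0 < (I.length : ℝ) := by
      have := List.length_pos_iff.2 hne; exact_mod_cast this
    obtain ⟨A, hAmem, hAmax⟩ : ∃ A ∈ I.toFinset, ∀ a ∈ I.toFinset, I.count a ≤ I.count A := by
      apply Finset.exists_max_image
      exact (List.toFinset_nonempty_iff I).2 hne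
    set M := freq I A with hMdef
    have hM : 0 ≤ M := freq_nonneg I A
    have hb : ∀ a ∈ I, freq I a ≤ M := by
      intro a ha
      have h := hAmax a (List.mem_toFinset.2 ha)
      show (I.count a : ℝ)/(I.length:ℝ) ≤ (I.count A : ℝ)/(I.length:ℝ)
      gcongr
    have hA : ∀ a ∈ I, a ≠ A → freq I a ≤ freq I A := fun a ha _ => hb a ha
    have h0 : ∀ a, 0 ≤ freq I a := freq_nonneg I
    have hcnt : (I.countP (· ≠ A) : ℕ) + I.count A = I.length := by
      have := List.length_eq_countP_add_countP (fun x => decide (x ≠ A)) (l := I)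
      rw [List.count, this]
      have : List.countP (fun a => decide ¬(decide (a ≠ A) = true)) I
          = List.countP (· == A) I := by
        apply List.countP_congr
        intro x _
        by_cases h : x = A <;> simp [h]
      omega
    have hup := dsum_le (freq I) A M hM h0 I (0,0) hb hA
    have hlo := dsum_ge (freq I) A M hM h0 I (0,0) hb (Or.inl rfl)
    rw [← naiP_sub_majP] at hup hlo
    have hQ : (if ((0:ℕ),(0:ℕ)).1 = A then (0:ℝ) else (((0:ℕ),(0:ℕ)).2 : ℝ)) = 0 := by
      split <;> simp
    rw [hQ, add_zero] at hup hlo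
    -- now |diff| ≤ M * countP, and M * countP ≤ n/4
    have hbound : M * ((I.countP (· ≠ A) : ℕ) : ℝ) ≤ (I.length : ℝ) / 4 := by
      have hMeq : M = (I.count A : ℝ) / (I.length : ℝ) := rfl
      have hc' : ((I.countP (· ≠ A) : ℕ) : ℝ) + (I.count A : ℝ) = (I.length : ℝ) := by
        exact_mod_cast congrArg (fun x : ℕ => (x:ℝ)) hcnt
      rw [hMeq, div_mul_eq_mul_div, div_le_div_iff₀ hn (by norm_num)]
      nlinarith [sq_nonneg (((I.countP (· ≠ A) : ℕ) : ℝ) - (I.count A : ℝ))]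
    rw [abs_le]
    constructor <;> nlinarith [hup, hlo, hbound]


lemma bufs_append (s : ℕ × ℕ) (L L' : List ℕ) :
    bufs s (L ++ L') = bufs s L ++ bufs (L.foldl majStep s) L' := by
  induction L generalizing s with
  | nil => simp [bufs]
  | cons a L ih => simp [bufs, ih, List.foldl_cons]

lemma majStep_zero (j : ℕ) : majStep (0, j) 0 = (0, j + 1) := by
  rcases j with _ | j <;> simp [majStep]

lemma bufs_replicate (q : ℕ) : ∀ j, bufs (0, j) (List.replicate q 0) = List.replicate q 0 ∧
    (List.replicate q 0).foldl majStep (0, j) = (0, j + q) := by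
  induction q with
  | zero => intro j; simp [bufs]
  | succ q ih =>
      intro j
      rw [List.replicate_succ]
      constructor
      · show bufs (0,j) (0 :: _) = _
        rw [bufs, majStep_zero]
        rw [(ih (j+1)).1]
      · rw [List.foldl_cons, majStep_zero, (ih (j+1)).2]
        ring_nf
  
lemma bufs_dec (T : List ℕ) : ∀ j, (∀ a ∈ T, a ≠ 0) → T.length ≤ j →
    bufs (0, j) T = List.replicate T.length 0 := by
  induction T with
  | nil => intro j _ _; simp [bufs]
  | cons a T ih =>
      intro j hne hlen
      have hj : j ≠ 0 := by simp at hlen; omega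
      have ha : a ≠ 0 := hne a List.mem_cons_self
      have hstep : majStep (0, j) a = (0, j - 1) := by
        simp [majStep, hj, ha]
      rw [bufs, hstep]
      simp only [List.length_cons, List.replicate_succ]
      rw [ih (j-1) (fun x hx => hne x (List.mem_cons_of_mem _ hx)) (by simp at hlen ⊢; omega)]

lemma majBuffers_Iseq (n : ℕ) : majBuffers (Iseq n) = List.replicate n 0 := by
  rw [majBuffers_eq, Iseq, bufs_append, (bufs_replicate _ _).1, (bufs_replicate _ _).2]
  rw [bufs_dec]
  · rw [← List.replicate_add]
    congr 1
    simp; omega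
  · intro a ha; simp at ha; omega
  · simp; omega

lemma count_zero_Iseq (n : ℕ) : (Iseq n).count 0 = (n + 1) / 2 := by
  have h0 : List.count 0 ((List.range (n/2)).map (· + 1)) = 0 := by
    apply List.count_eq_zero_of_not_mem; simp
  rw [Iseq, List.count_append, List.count_replicate, h0]
  simp

lemma count_succ_Iseq (n i : ℕ) (hi : i < n / 2) : (Iseq n).count (i + 1) = 1 := by
  rw [Iseq, List.count_append, List.count_replicate]
  have h1 : ((List.range (n/2)).map (· + 1)).count (i+1) = 1 := by
    apply List.count_eq_one_of_mem
    · exact List.nodup_range.map (fun a b h => by omega)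
    · simp; exact hi
  simp [h1]

lemma length_Iseq (n : ℕ) : (Iseq n).length = n := by
  simp [Iseq]; omega

lemma profit_append (I S1 S2 : List ℕ) : profit I (S1 ++ S2) = profit I S1 + profit I S2 := by
  simp [profit]

lemma const_profit (I : List ℕ) (S : List ℕ) (r : ℝ) (h : ∀ x ∈ S, freq I x = r) :
    profit I S = S.length * r := by
  rw [profit]
  rw [List.sum_eq_card_nsmul _ r]
  · simp [mul_comm]
  · intro x hx
    simp at hx
    obtain ⟨a, ha, rfl⟩ := hx
    exact h a ha

lemma majP_Iseq (n : ℕ) : majP (Iseq n) = (((n+1)/2 : ℕ) : ℝ) := by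
  rcases Nat.eq_zero_or_pos n with rfl | hn
  · simp [majP, profit, majBuffers_Iseq]
  rw [majP, majBuffers_Iseq, const_profit _ _ ((((n+1)/2 : ℕ):ℝ)/(n:ℝ))]
  · rw [List.length_replicate]
    have hn' : (n:ℝ) ≠ 0 := by positivity
    field_simp
  · intro x hx
    rw [List.eq_of_mem_replicate hx, freq, count_zero_Iseq, length_Iseq]

lemma naiP_Iseq (n : ℕ) :
    naiP (Iseq n) = ((((n+1)/2 : ℕ):ℝ)^2 + ((n/2 : ℕ):ℝ)) / (n:ℝ) := by
  rcases Nat.eq_zero_or_pos n with rfl | hn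
  · simp [naiP, profit, Iseq]
  have hn' : (n:ℝ) ≠ 0 := by positivity
  rw [naiP]
  nth_rewrite 2 [Iseq]
  rw [profit_append]
  rw [const_profit _ _ ((((n+1)/2 : ℕ):ℝ)/(n:ℝ))
    (fun x hx => by rw [List.eq_of_mem_replicate hx, freq, count_zero_Iseq, length_Iseq])]
  rw [const_profit _ _ (1/(n:ℝ))]
  · simp only [List.length_replicate, List.length_map, List.length_range]
    field_simp
  · intro x hx
    simp at hx
    obtain ⟨i, hi, rfl⟩ := hx
    rw [freq, count_succ_Iseq n i hi, length_Iseq]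
    norm_num

lemma diff_Iseq (n : ℕ) : majP (Iseq n) - naiP (Iseq n) =
    (((n + 1) / 2 : ℕ) : ℝ) - ((n / 2 : ℕ) : ℝ) / n - (((n + 1) / 2 : ℕ) : ℝ) ^ 2 / n := by
  rcases Nat.eq_zero_or_pos n with rfl | hn
  · simp [majP_Iseq, naiP_Iseq]
  rw [majP_Iseq, naiP_Iseq]; ring


def Fp (k : ℕ) : List ℕ := (List.range k).flatMap fun i => [i + 1, 0]

lemma Fp_succ (k : ℕ) : Fp (k + 1) = Fp k ++ [k + 1, 0] := by
  rw [Fp, List.range_succ, List.flatMap_append]; rfl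

lemma count_Fp (x k : ℕ) :
    (Fp k).count x = if x = 0 then k else if 1 ≤ x ∧ x ≤ k then 1 else 0 := by
  induction k with
  | zero => simp [Fp]; intros; omega
  | succ k ih =>
      rw [Fp_succ, List.count_append, ih]
      have : List.count x [k+1, 0] = (if x = 0 then 1 else if x = k+1 then 1 else 0) := by
        rcases eq_or_ne x 0 with rfl | h0
        · simp
        · rcases eq_or_ne x (k+1) with rfl | h1
          · simp [h0]
          · simp [h0, h1, Ne.symm h0, Ne.symm h1]
      rw [this]
      split_ifs <;> omega

lemma bufs_Fp (k : ℕ) : ∀ b : ℕ, bufs (b, 0) (Fp k) = ((List.range k).flatMap fun i => [i+1, i+1])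
    ∧ ∃ b', (Fp k).foldl majStep (b, 0) = (b', 0) := by
  induction k with
  | zero => intro b; exact ⟨by simp [Fp, bufs], b, by simp [Fp]⟩
  | succ k ih =>
      intro b
      obtain ⟨h1, b', h2⟩ := ih b
      have step1 : majStep (b', 0) (k+1) = (k+1, 1) := by simp [majStep]
      have step2 : majStep (k+1, 1) 0 = (k+1, 0) := by simp [majStep]
      constructor
      · rw [Fp_succ, bufs_append, h1, h2]
        rw [List.range_succ, List.flatMap_append]
        have hzz : bufs (b', 0) [k+1, 0] = [k+1, k+1] := by simp [bufs, step1, step2]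
        rw [hzz]
        simp
      · refine ⟨k+1, ?_⟩
        rw [Fp_succ, List.foldl_append, h2]
        simp [List.foldl, step1, step2]

lemma length_Wseq (n : ℕ) : (Wseq n).length = n := by
  have : (Fp (n/2)).length = 2 * (n/2) := by
    induction (n/2) with
    | zero => simp [Fp]
    | succ k ih => rw [Fp_succ]; simp at ih ⊢; omega
  rw [Wseq]
  show ((Fp (n/2)) ++ _).length = n
  rw [List.length_append, this]
  split_ifs <;> simp <;> omega

lemma count_Wseq (x n : ℕ) : (Wseq n).count x =
    (if x = 0 then n/2 else if 1 ≤ x ∧ x ≤ n/2 then 1 else if x = n/2 + 1 ∧ n % 2 = 1 then 1 else 0) := by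
  rw [Wseq]
  show ((Fp (n/2)) ++ _).count x = _
  rw [List.count_append, count_Fp]
  have : List.count x (if n % 2 = 1 then [n / 2 + 1] else []) =
      if x = n/2 + 1 ∧ n % 2 = 1 then 1 else 0 := by
    by_cases hodd : n % 2 = 1
    · by_cases hx : x = n/2 + 1
      · simp [hodd, hx]
      · rw [if_pos hodd, if_neg (fun h => hx h.1)]; exact List.count_eq_zero_of_not_mem (by simp [hx])
    · simp [hodd]
  rw [this]
  split_ifs <;> omega

lemma profit_flatMap (I : List ℕ) (g : ℕ → List ℕ) (k : ℕ) :
    profit I ((List.range k).flatMap g) = ((List.range k).map fun i => profit I (g i)).sum := by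
  induction k with
  | zero => simp [profit]
  | succ k ih =>
      rw [List.range_succ, List.flatMap_append, profit_append, ih, List.map_append,
        List.sum_append]
      simp [profit]

lemma majP_Wseq (n : ℕ) (hn : 0 < n) : majP (Wseq n) = 1 := by
  have hn' : (n:ℝ) ≠ 0 := by positivity
  have hfreq : ∀ i < n/2, freq (Wseq n) (i+1) = 1/(n:ℝ) := by
    intro i hi
    rw [freq, count_Wseq, length_Wseq]
    have : ¬(i + 1 = 0) := by omega
    rw [if_neg this, if_pos ⟨by omega, by omega⟩]
    norm_num
  have hfreq2 : n % 2 = 1 → freq (Wseq n) (n/2+1) = 1/(n:ℝ) := by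
    intro hodd
    rw [freq, count_Wseq, length_Wseq]
    rw [if_neg (by omega), if_neg (by omega), if_pos ⟨rfl, hodd⟩]
    norm_num
  obtain ⟨b', hb'⟩ := (bufs_Fp (n/2) 0).2
  have hbufs : bufs (0,0) (Wseq n) = ((List.range (n/2)).flatMap fun i => [i+1,i+1])
      ++ bufs (b',0) (if n % 2 = 1 then [n/2+1] else []) := by
    rw [show Wseq n = Fp (n/2) ++ (if n % 2 = 1 then [n / 2 + 1] else []) from rfl,
      bufs_append, (bufs_Fp _ _).1, hb']
  rw [majP, majBuffers_eq, hbufs, profit_append, profit_flatMap]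
  have h1 : ((List.range (n/2)).map fun i => profit (Wseq n) [i+1, i+1]).sum
      = (n/2 : ℕ) * (2/(n:ℝ)) := by
    rw [List.sum_eq_card_nsmul _ (2/(n:ℝ))]
    · simp [mul_comm]
    · intro x hx
      simp at hx
      obtain ⟨i, hi, rfl⟩ := hx
      rw [profit]
      simp [hfreq i hi]
      ring
  rw [h1]
  rcases Nat.even_or_odd n with he | ho
  · have h2 : n % 2 = 0 := Nat.even_iff.1 he
    rw [if_neg (by omega)]
    have h3 : n / 2 * 2 = n := by omega
    have hcast : ((n/2 : ℕ):ℝ) = (n:ℝ)/2 := by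
      field_simp
      exact_mod_cast congrArg (fun m : ℕ => (m:ℝ)) h3
    have hemp : profit (Wseq n) (bufs (b', 0) []) = 0 := by simp [profit, bufs]
    rw [hemp, hcast]
    field_simp
    norm_num
  · have h2 : n % 2 = 1 := Nat.odd_iff.1 ho
    rw [if_pos h2]
    have hstep : majStep (b', 0) (n/2+1) = (n/2+1, 1) := by simp [majStep]
    have hb : bufs (b', 0) [n/2+1] = [n/2+1] := by simp [bufs, hstep]
    rw [hb]
    have hp : profit (Wseq n) [n/2+1] = 1/(n:ℝ) := by
      rw [profit, List.map_singleton, List.sum_singleton, hfreq2 h2]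
    rw [hp]
    have h3 : 2 * (n/2) + 1 = n := by omega
    have hcast : ((n/2 : ℕ):ℝ) = ((n:ℝ)-1)/2 := by
      have hx := congrArg (fun m : ℕ => (m:ℝ)) h3
      push_cast at hx
      linarith
    rw [hcast]
    field_simp
    try ring

lemma naiP_Wseq (n : ℕ) (hn : 0 < n) :
    naiP (Wseq n) = (((n/2:ℕ):ℝ)^2 + ((n/2:ℕ):ℝ) + ((n % 2 : ℕ):ℝ)) / n := by
  have hn' : (n:ℝ) ≠ 0 := by positivity
  have hfreq0 : freq (Wseq n) 0 = ((n/2:ℕ):ℝ)/(n:ℝ) := by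
    rw [freq, count_Wseq, length_Wseq, if_pos rfl]
  have hfreq : ∀ i < n/2, freq (Wseq n) (i+1) = 1/(n:ℝ) := by
    intro i hi
    rw [freq, count_Wseq, length_Wseq]
    rw [if_neg (by omega), if_pos ⟨by omega, by omega⟩]
    norm_num
  have hfreq2 : n % 2 = 1 → freq (Wseq n) (n/2+1) = 1/(n:ℝ) := by
    intro hodd
    rw [freq, count_Wseq, length_Wseq]
    rw [if_neg (by omega), if_neg (by omega), if_pos ⟨rfl, hodd⟩]
    norm_num
  rw [naiP]
  nth_rewrite 2 [show Wseq n = Fp (n/2) ++ (if n % 2 = 1 then [n / 2 + 1] else []) from rfl]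
  rw [profit_append, Fp, profit_flatMap]
  have h1 : ((List.range (n/2)).map fun i => profit (Wseq n) [i+1, 0]).sum
      = (n/2 : ℕ) * ((1 + ((n/2:ℕ):ℝ))/(n:ℝ)) := by
    rw [List.sum_eq_card_nsmul _ ((1 + ((n/2:ℕ):ℝ))/(n:ℝ))]
    · simp [mul_comm]
    · intro x hx
      simp at hx
      obtain ⟨i, hi, rfl⟩ := hx
      rw [profit]
      simp [hfreq i hi, hfreq0]
      ring
  rw [h1]
  rcases Nat.even_or_odd n with he | ho
  · have h2 : n % 2 = 0 := Nat.even_iff.1 he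
    rw [if_neg (by omega), h2]
    simp [profit]
    field_simp
    ring
  · have h2 : n % 2 = 1 := Nat.odd_iff.1 ho
    rw [if_pos h2, h2]
    rw [profit]
    simp [hfreq2 h2]
    field_simp
    ring



lemma diff_Wseq (n : ℕ) (hn : 0 < n) : naiP (Wseq n) - majP (Wseq n) =
    (((n/2:ℕ):ℝ)^2 - ((n/2:ℕ):ℝ))/n := by
  rw [naiP_Wseq n hn, majP_Wseq n hn]
  have h3 : 2*(n/2) + n%2 = n := by omega
  have hx := congrArg (fun m:ℕ => (m:ℝ)) h3
  push_cast at hx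
  have hn' : (n:ℝ) ≠ 0 := by positivity
  field_simp
  linarith

lemma mem_diffSet (n : ℕ) (I : List ℕ) (h : I.length = n) :
    naiP I - majP I ∈ {d | ∃ I : List ℕ, I.length = n ∧ d = naiP I - majP I} :=
  ⟨I, h, rfl⟩

lemma diffSet_nonempty (n : ℕ) :
    {d | ∃ I : List ℕ, I.length = n ∧ d = naiP I - majP I}.Nonempty :=
  ⟨_, mem_diffSet n (List.replicate n 0) (by simp)⟩

lemma diffSet_le (n : ℕ) : ∀ d ∈ {d | ∃ I : List ℕ, I.length = n ∧ d = naiP I - majP I},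
    d ≤ (n:ℝ)/4 := by
  rintro d ⟨I, hlen, rfl⟩
  have := abs_naiP_sub_majP I
  rw [hlen] at this
  calc naiP I - majP I ≤ |naiP I - majP I| := le_abs_self _
  _ ≤ _ := this

lemma diffSet_ge (n : ℕ) : ∀ d ∈ {d | ∃ I : List ℕ, I.length = n ∧ d = naiP I - majP I},
    -((n:ℝ)/4) ≤ d := by
  rintro d ⟨I, hlen, rfl⟩
  have := abs_naiP_sub_majP I
  rw [hlen] at this
  have := neg_abs_le (naiP I - majP I)
  linarith [abs_naiP_sub_majP I, hlen ▸ abs_naiP_sub_majP I]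

lemma maxDiff_le (n : ℕ) : maxDiff naiP majP n ≤ (n:ℝ)/4 :=
  csSup_le (diffSet_nonempty n) (diffSet_le n)

lemma maxDiff_ge (n : ℕ) (hn : 0 < n) :
    (((n/2:ℕ):ℝ)^2 - ((n/2:ℕ):ℝ))/n ≤ maxDiff naiP majP n := by
  rw [← diff_Wseq n hn]
  exact le_csSup ⟨(n:ℝ)/4, fun d hd => diffSet_le n d hd⟩ (mem_diffSet n _ (length_Wseq n))

lemma minDiff_ge (n : ℕ) : -((n:ℝ)/4) ≤ minDiff naiP majP n :=
  le_csInf (diffSet_nonempty n) (diffSet_ge n)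

lemma minDiff_le (n : ℕ) :
    minDiff naiP majP n ≤ ((n/2:ℕ):ℝ)/n + (((n+1)/2:ℕ):ℝ)^2/n - (((n+1)/2:ℕ):ℝ) := by
  have h : naiP (Iseq n) - majP (Iseq n)
      = ((n/2:ℕ):ℝ)/n + (((n+1)/2:ℕ):ℝ)^2/n - (((n+1)/2:ℕ):ℝ) := by
    have := diff_Iseq n
    linarith
  rw [← h]
  exact csInf_le ⟨-((n:ℝ)/4), fun d hd => diffSet_ge n d hd⟩ (mem_diffSet n _ (length_Iseq n))

lemma tendsto_maxDiff : Filter.Tendsto (fun n : ℕ => maxDiff naiP majP n / n)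
    Filter.atTop (nhds (1/4 : ℝ)) := by
  have t1 : Filter.Tendsto (fun n : ℕ => 1/(n:ℝ)) Filter.atTop (nhds 0) :=
    tendsto_one_div_atTop_nhds_zero_nat
  have tl : Filter.Tendsto (fun n : ℕ => ((n:ℝ)-1)*((n:ℝ)-3)/(4*(n:ℝ)^2))
      Filter.atTop (nhds (1/4 : ℝ)) := by
    have h : Filter.Tendsto (fun n : ℕ => (1 - 1/(n:ℝ)) * (1 - 3*(1/(n:ℝ))) / 4)
        Filter.atTop (nhds ((1 - 0) * (1 - 3*0)/4 : ℝ)) := by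
      apply Filter.Tendsto.div_const
      exact (Filter.Tendsto.const_sub _ t1).mul (Filter.Tendsto.const_sub _ (t1.const_mul 3))
    norm_num at h
    apply h.congr'
    filter_upwards [Filter.eventually_ge_atTop 1] with n hn
    have hn' : (0:ℝ) < (n:ℝ) := by exact_mod_cast (by omega : 0 < n)
    show (1 - ((n:ℝ))⁻¹) * (1 - 3 * ((n:ℝ))⁻¹) / 4 = ((n:ℝ)-1)*((n:ℝ)-3)/(4*(n:ℝ)^2)
    rw [div_eq_div_iff (by norm_num : (4:ℝ) ≠ 0) (by positivity : (4*(n:ℝ)^2) ≠ 0)]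
    field_simp
  apply tendsto_of_tendsto_of_tendsto_of_le_of_le' tl tendsto_const_nhds
  · filter_upwards [Filter.eventually_ge_atTop 3] with n hn
    have hn0 : 0 < n := by omega
    have hnr : (0:ℝ) < n := by exact_mod_cast hn0
    have h1 := maxDiff_ge n hn0
    have hk : (n:ℝ) - 1 ≤ 2 * ((n/2:ℕ):ℝ) := by
      have : n - 1 ≤ 2 * (n/2) := by omega
      have := congrArg (fun m:ℕ => (m:ℝ)) (rfl : n - 1 = n - 1)
      have hcast : ((n:ℝ)) - 1 ≤ ((2 * (n/2) : ℕ) : ℝ) := by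
        have h2 : ((n - 1 : ℕ) : ℝ) ≤ ((2 * (n/2) : ℕ) : ℝ) := by exact_mod_cast ‹n - 1 ≤ 2 * (n/2)›
        have h3 : ((n:ℝ)) - 1 ≤ ((n - 1 : ℕ) : ℝ) := by
          have : 1 ≤ n := by omega
          push_cast [this]
          ring_nf
          exact le_rfl
        linarith
      push_cast at hcast
      linarith
    have hn3 : (3:ℝ) ≤ (n:ℝ) := by exact_mod_cast hn
    have h1' : ((n/2:ℕ):ℝ)^2 - ((n/2:ℕ):ℝ) ≤ maxDiff naiP majP n * n := by
      rwa [div_le_iff₀ hnr] at h1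
    rw [div_le_div_iff₀ (by positivity) hnr]
    set K := ((n/2:ℕ):ℝ) with hKdef
    have hpos : (0:ℝ) ≤ 2*K - ((n:ℝ)-1) := by linarith
    have h4 : ((n:ℝ)-1)*((n:ℝ)-3) ≤ 4*(K^2 - K) := by nlinarith [hpos, hn3]
    have h5 : 4*(K^2 - K)*(n:ℝ) ≤ maxDiff naiP majP n * (4*(n:ℝ)^2) := by
      nlinarith [h1', hnr]
    nlinarith [mul_le_mul_of_nonneg_right h4 hnr.le, h5]
  · filter_upwards [Filter.eventually_ge_atTop 1] with n hn
    have hnr : (0:ℝ) < n := by exact_mod_cast (by omega : 0 < n)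
    have := maxDiff_le n
    rw [div_le_iff₀ hnr] at *
    calc maxDiff naiP majP n ≤ (n:ℝ)/4 := maxDiff_le n
    _ = 1/4 * n := by ring

lemma tendsto_minDiff : Filter.Tendsto (fun n : ℕ => minDiff naiP majP n / n)
    Filter.atTop (nhds (-(1/4) : ℝ)) := by
  have t1 : Filter.Tendsto (fun n : ℕ => 1/(n:ℝ)) Filter.atTop (nhds 0) :=
    tendsto_one_div_atTop_nhds_zero_nat
  have tl : Filter.Tendsto (fun n : ℕ => -(((n:ℝ)-1)*((n:ℝ)-2)/(4*(n:ℝ)^2)))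
      Filter.atTop (nhds (-(1/4) : ℝ)) := by
    apply Filter.Tendsto.neg
    have h : Filter.Tendsto (fun n : ℕ => (1 - 1/(n:ℝ)) * (1 - 2*(1/(n:ℝ))) / 4)
        Filter.atTop (nhds ((1 - 0) * (1 - 2*0)/4 : ℝ)) := by
      apply Filter.Tendsto.div_const
      exact (Filter.Tendsto.const_sub _ t1).mul (Filter.Tendsto.const_sub _ (t1.const_mul 2))
    norm_num at h
    apply h.congr'
    filter_upwards [Filter.eventually_ge_atTop 1] with n hn
    have hn' : (0:ℝ) < (n:ℝ) := by exact_mod_cast (by omega : 0 < n)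
    show (1 - ((n:ℝ))⁻¹) * (1 - 2 * ((n:ℝ))⁻¹) / 4 = ((n:ℝ)-1)*((n:ℝ)-2)/(4*(n:ℝ)^2)
    rw [div_eq_div_iff (by norm_num : (4:ℝ) ≠ 0) (by positivity : (4*(n:ℝ)^2) ≠ 0)]
    field_simp
  apply tendsto_of_tendsto_of_tendsto_of_le_of_le' tendsto_const_nhds tl
  · filter_upwards [Filter.eventually_ge_atTop 1] with n hn
    have hnr : (0:ℝ) < n := by exact_mod_cast (by omega : 0 < n)
    have h := minDiff_ge n
    rw [le_div_iff₀ hnr]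
    nlinarith [h, hnr]
  · filter_upwards [Filter.eventually_ge_atTop 2] with n hn
    have hnr : (0:ℝ) < n := by exact_mod_cast (by omega : 0 < n)
    have hn2 : (2:ℝ) ≤ (n:ℝ) := by exact_mod_cast hn
    have h := minDiff_le n
    set K := ((n/2:ℕ):ℝ) with hK
    set Q := (((n+1)/2:ℕ):ℝ) with hQ
    have hKQ : K + Q = (n:ℝ) := by
      rw [hK, hQ]
      have h2 : n/2 + (n+1)/2 = n := by omega
      have h4 := congrArg (fun m:ℕ => (m:ℝ)) h2
      push_cast at h4
      linarith
    have hK1 : (n:ℝ) - 1 ≤ 2*K := by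
      rw [hK]
      have h2 : n - 1 ≤ 2*(n/2) := by omega
      have h3 := congrArg (fun m:ℕ => (m:ℝ)) (rfl : 2*(n/2) = 2*(n/2))
      have h4 : ((n-1:ℕ):ℝ) ≤ ((2*(n/2):ℕ):ℝ) := by exact_mod_cast h2
      have h5 : ((n:ℝ)) - 1 ≤ ((n-1:ℕ):ℝ) := by
        have h6 : 1 ≤ n := by omega
        push_cast [h6]
        exact le_rfl
      push_cast at h4
      linarith
    have hQ1 : (n:ℝ) ≤ 2*Q := by
      rw [hQ]
      have h2 : n ≤ 2*((n+1)/2) := by omega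
      have h4 : ((n:ℕ):ℝ) ≤ ((2*((n+1)/2):ℕ):ℝ) := by exact_mod_cast h2
      push_cast at h4
      linarith
    -- minDiff/n ≤ -(n-1)(n-2)/(4n²)
    rw [div_le_iff₀ hnr]
    have hfact : 4*(K*(Q-1)) ≥ ((n:ℝ)-1)*((n:ℝ)-2) := by nlinarith [hK1, hQ1, hn2]
    have hmain : K/(n:ℝ) + Q^2/(n:ℝ) - Q ≤ -(((n:ℝ)-1)*((n:ℝ)-2)/(4*(n:ℝ)^2)) * n := by
      have hne : (n:ℝ) ≠ 0 := ne_of_gt hnr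
      have hR : -(((n:ℝ)-1)*((n:ℝ)-2)/(4*(n:ℝ)^2)) * n
          = -(((n:ℝ)-1)*((n:ℝ)-2))/(4*(n:ℝ)) := by
        field_simp
      have hL : K/(n:ℝ) + Q^2/(n:ℝ) - Q = (K + Q^2 - Q*(n:ℝ))/(n:ℝ) := by
        field_simp
      rw [hR, hL, div_le_div_iff₀ hnr (by positivity)]
      have hQn : Q*(n:ℝ) = Q*K + Q^2 := by rw [← hKQ]; ring
      have hgoal2 : (K + Q^2 - Q*(n:ℝ)) = -(K*(Q-1)) := by rw [hQn]; ring
      rw [hgoal2]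
      have hs : 0 ≤ 4*(K*(Q-1)) - ((n:ℝ)-1)*((n:ℝ)-2) := by linarith
      nlinarith [mul_nonneg hs hnr.le]
    calc minDiff naiP majP n ≤ K/(n:ℝ) + Q^2/(n:ℝ) - Q := h
    _ ≤ _ := hmain

end

/-- the relative interval of Nai versus Maj is [−1/4, 1/4];
on I_n = ⌈n/2⌉ copies of a_0 followed by ⌊n/2⌋ distinct items,
Maj(I_n) − Nai(I_n) = ⌈n/2⌉ − ⌊n/2⌋/n − ⌈n/2⌉²/n. -/
theorem stmt15 :
    Filter.limsup (fun n => maxDiff naiP majP n / (n : ℝ)) Filter.atTop = 1 / 4 ∧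
    Filter.liminf (fun n => minDiff naiP majP n / (n : ℝ)) Filter.atTop = -(1 / 4) ∧
    (∀ n : ℕ, majP (Iseq n) - naiP (Iseq n) =
      (((n + 1) / 2 : ℕ) : ℝ) - ((n / 2 : ℕ) : ℝ) / n -
        (((n + 1) / 2 : ℕ) : ℝ) ^ 2 / n) := ⟨tendsto_maxDiff.limsup_eq, tendsto_minDiff.liminf_eq, diff_Iseq⟩
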